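/- Define x_0 = 1/2 and x_n = x_{n−1}/2 for n even, x_n = x_{n−1}² for n odd (n ≥ 1). Then x_n² ≤ x_{n+1} ≤ x_n for all n ≥ 0, but there is no constant C > 1 and exponent ν > 0 such that x_{n+1}/x_{n+2} ≤ C²(x_n/x_{n+1})^ν holds for all sufficiently large n. -/

import Mathlib

open Filter Topology

theorem stmt_15 (x : ℕ → ℝ) (h0 : x 0 = 1 / 2)
    (hrec : ∀ n : ℕ, x (n + 1) = if Even (n + 1) then x n / 2 else (x n) ^ 2) :
    (∀ n : ℕ, (x n) ^ 2 ≤ x (n + 1) ∧ x (n + 1) ≤ x n) ∧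
      ¬ ∃ C : ℝ, 1 < C ∧ ∃ ν : ℝ, 0 < ν ∧
        ∀ᶠ n in atTop, x (n + 1) / x (n + 2) ≤ C ^ 2 * (x n / x (n + 1)) ^ ν := by
  have hpos : ∀ n : ℕ, 0 < x n ∧ x n ≤ 1 / 2 := by
    intro n
    induction n with
    | zero => rw [h0]; norm_num
    | succ n ih =>
      obtain ⟨h1, h2⟩ := ih
      rw [hrec n]
      split
      · constructor <;> linarith
      · constructor
        · positivity
        · nlinarith
  have key : ∀ n : ℕ, (x n) ^ 2 ≤ x (n + 1) ∧ x (n + 1) ≤ x n := by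
    intro n
    obtain ⟨h1, h2⟩ := hpos n
    rw [hrec n]
    split
    · constructor <;> nlinarith
    · constructor <;> nlinarith
  refine ⟨key, ?_⟩
  rintro ⟨C, hC, ν, hν, hev⟩
  have hbound : ∀ k : ℕ, x (2 * k) ≤ (1 / 2 : ℝ) ^ (k + 1) := by
    intro k
    induction k with
    | zero => norm_num [h0]
    | succ k ih =>
      have hodd : ¬ Even (2 * k + 1) := by simp [Nat.even_add_one]
      have heven : Even (2 * k + 1 + 1) := ⟨k + 1, by ring⟩
      have h1 : x (2 * k + 1) = x (2 * k) ^ 2 := by rw [hrec]; simp [hodd]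
      have h2 : x (2 * (k + 1)) = x (2 * k + 1) / 2 := by
        rw [show 2 * (k + 1) = 2 * k + 1 + 1 by ring, hrec]; simp [heven]
      obtain ⟨hp, hle⟩ := hpos (2 * k)
      rw [h2, h1]
      have hsq : x (2 * k) ^ 2 ≤ x (2 * k) := by nlinarith
      calc x (2 * k) ^ 2 / 2 ≤ x (2 * k) / 2 := by linarith
        _ ≤ (1 / 2 : ℝ) ^ (k + 1) / 2 := by linarith
        _ = (1 / 2 : ℝ) ^ (k + 1 + 1) := by ring
  obtain ⟨N, hN⟩ := Filter.eventually_atTop.mp hev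
  have hM : (0 : ℝ) < C ^ 2 * (2 : ℝ) ^ ν := by positivity
  obtain ⟨k0, hk0⟩ := exists_pow_lt_of_lt_one
    (show (0 : ℝ) < 1 / (C ^ 2 * (2 : ℝ) ^ ν) by positivity)
    (show (1 / 2 : ℝ) < 1 by norm_num)
  set k := max k0 N with hk
  have hkN : N ≤ 2 * k + 1 := by have : N ≤ k := le_max_right _ _; omega
  have hineq := hN (2 * k + 1) hkN
  simp only [show 2 * k + 1 + 1 = 2 * k + 2 from by ring,
    show 2 * k + 1 + 2 = 2 * k + 3 from by ring] at hineq
  have heven : Even (2 * k + 1 + 1) := ⟨k + 1, by ring⟩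
  have hodd : ¬ Even (2 * k + 2 + 1) := by simp [Nat.even_add_one, Nat.even_add]
  have e1 : x (2 * k + 2) = x (2 * k + 1) / 2 := by
    rw [show 2 * k + 2 = 2 * k + 1 + 1 by ring, hrec]; simp [heven]
  have e2 : x (2 * k + 3) = x (2 * k + 2) ^ 2 := by
    rw [show 2 * k + 3 = 2 * k + 2 + 1 by ring, hrec]; simp [hodd]
  obtain ⟨p1, _⟩ := hpos (2 * k + 1)
  obtain ⟨p2, _⟩ := hpos (2 * k + 2)
  have r1 : x (2 * k + 1) / x (2 * k + 2) = 2 := by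
    rw [e1]; field_simp
  have r2 : x (2 * k + 2) / x (2 * k + 3) = 1 / x (2 * k + 2) := by
    rw [e2]; field_simp
  rw [r1, r2] at hineq
  -- hineq : 1 / x (2*k+2) ≤ C ^ 2 * 2 ^ ν
  have hb : x (2 * k + 2) ≤ (1 / 2 : ℝ) ^ (k + 2) := by
    have := hbound (k + 1)
    rwa [show 2 * (k + 1) = 2 * k + 2 by ring] at this
  have hb2 : (1 / 2 : ℝ) ^ (k + 2) ≤ (1 / 2 : ℝ) ^ k0 := by
    apply pow_le_pow_of_le_one (by norm_num) (by norm_num)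
    have : k0 ≤ k := le_max_left _ _
    omega
  have hlt : x (2 * k + 2) < 1 / (C ^ 2 * (2 : ℝ) ^ ν) := lt_of_le_of_lt (hb.trans hb2) hk0
  have h1 : 1 ≤ C ^ 2 * (2 : ℝ) ^ ν * x (2 * k + 2) := by
    rw [div_le_iff₀ p2] at hineq; linarith
  have hcancel : C ^ 2 * (2 : ℝ) ^ ν * (1 / (C ^ 2 * (2 : ℝ) ^ ν)) = 1 := by
    field_simp
  nlinarith [mul_lt_mul_of_pos_left hlt hM]
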